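/- The nonnegative toric variety X_A equals the topological closure (in ℝ_{≥0}^m with the Euclidean topology) of the image of the monomial map φ_A; equivalently, a probability distribution P lies in X_A if and only if P factors according to A or is a limit of distributions that factor according to A. -/

import Mathlib

open Finset

noncomputable def rcast {n : Type*} (q : n → ℚ) : n → ℝ := fun j => (q j : ℝ)

lemma exists_int_scaling {ι : Type*} [Fintype ι] (q : ι → ℚ) :
    ∃ N : ℕ, 0 < N ∧ ∀ i, ∃ z : ℤ, (q i) * N = z := by
  refine ⟨∏ i, (q i).den, Finset.prod_pos fun i _ => (q i).pos, fun i => ?_⟩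
  obtain ⟨t, ht⟩ := Finset.dvd_prod_of_mem (fun i => (q i).den) (Finset.mem_univ i)
  refine ⟨(q i).num * t, ?_⟩
  rw [ht]
  push_cast
  rw [← mul_assoc, Rat.mul_den_eq_num]



/-- Cast a rational vector to a real vector. -/
lemma rcast_sum_smul {n ι : Type*} [Fintype ι] (c : ι → ℚ) (u : ι → (n → ℚ)) :
    rcast (∑ i, c i • u i) = ∑ i, (c i : ℝ) • rcast (u i) := by
  funext j
  simp [rcast, Finset.sum_apply, Rat.cast_sum]

lemma mulVec_map_cast {ι n : Type*} [Fintype n] (M : Matrix ι n ℚ) (q : n → ℚ) :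
    (M.map fun x : ℚ => (x : ℝ)).mulVec (rcast q) = rcast (M.mulVec q) := by
  funext i
  simp [rcast, Matrix.mulVec, dotProduct, Rat.cast_sum]

lemma linearIndependent_rcast {ι n : Type*} [Fintype ι] [Fintype n] [DecidableEq ι] [DecidableEq n]
    {v : ι → n → ℚ} (hv : LinearIndependent ℚ v) :
    LinearIndependent ℝ (fun i => rcast (v i)) := by
  classical
  set M : Matrix ι n ℚ := Matrix.of v with hM
  have hinj : Function.Injective fun x => Matrix.vecMul x M := Matrix.vecMul_injective_iff.mpr hv
  have hker : LinearMap.ker M.vecMulLinear = ⊥ := by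
    rw [LinearMap.ker_eq_bot]
    intro a b hab
    exact hinj (by simpa [Matrix.vecMulLinear_apply] using hab)
  obtain ⟨g, hg⟩ := LinearMap.exists_leftInverse_of_injective _ hker
  set N : Matrix n ι ℚ := Matrix.of fun r c => g (Pi.single r 1) c with hN
  have hgN : ∀ y : n → ℚ, Matrix.vecMul y N = g y := by
    intro y
    funext c
    have hy : y = ∑ r, Pi.single r (y r) := (Finset.univ_sum_single y).symm
    have : g y c = ∑ r, y r * g (Pi.single r 1) c := by
      conv_lhs => rw [hy]
      rw [map_sum]
      rw [Finset.sum_apply]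
      refine Finset.sum_congr rfl fun r _ => ?_
      have hs : Pi.single r (y r) = y r • (Pi.single r 1 : n → ℚ) := by
        rw [← Pi.single_smul]; simp
      rw [hs, map_smul]
      simp [mul_comm]
    rw [this]
    simp [Matrix.vecMul, dotProduct, hN, mul_comm]
  have hMN : M * N = 1 := by
    have hx : ∀ x : ι → ℚ, Matrix.vecMul x (M * N) = x := by
      intro x
      rw [← Matrix.vecMul_vecMul, hgN]
      have := congrArg (fun f : (ι → ℚ) →ₗ[ℚ] (ι → ℚ) => f x) hg
      simpa [Matrix.vecMulLinear_apply] using this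
    ext i c
    have := congrFun (hx (Pi.single i 1)) c
    simpa [Matrix.vecMul, dotProduct, Pi.single_apply, Matrix.one_apply, eq_comm,
      Finset.sum_ite_eq] using this
  have hMNr : (M.map fun q : ℚ => (q : ℝ)) * (N.map fun q : ℚ => (q : ℝ)) = 1 := by
    have h1 : ((M * N).map ⇑(Rat.castHom ℝ)) = ((1 : Matrix ι ι ℚ).map ⇑(Rat.castHom ℝ)) := by
      rw [hMN]
    rw [Matrix.map_mul] at h1
    rw [show ⇑(Rat.castHom ℝ) = (fun q : ℚ => (q : ℝ)) from rfl] at h1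
    rw [h1]
    ext i c
    simp [Matrix.map_apply, Matrix.one_apply]
    split <;> simp
  have hinjr : Function.Injective fun x : ι → ℝ =>
      Matrix.vecMul x (M.map fun q : ℚ => (q : ℝ)) := by
    intro a b hab
    have hab' : Matrix.vecMul a (M.map fun q : ℚ => (q : ℝ)) =
        Matrix.vecMul b (M.map fun q : ℚ => (q : ℝ)) := hab
    have h2 : Matrix.vecMul (Matrix.vecMul a (M.map fun q : ℚ => (q : ℝ)))
        (N.map fun q : ℚ => (q : ℝ)) = Matrix.vecMul (Matrix.vecMul b (M.map fun q : ℚ => (q : ℝ)))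
        (N.map fun q : ℚ => (q : ℝ)) := by rw [hab']
    rwa [Matrix.vecMul_vecMul, Matrix.vecMul_vecMul, hMNr, Matrix.vecMul_one,
      Matrix.vecMul_one] at h2
  exact Matrix.vecMul_injective_iff.mp hinjr


lemma real_ker_le_span_rat_ker {ι n : Type*} [Fintype ι] [Fintype n] [DecidableEq ι]
    [DecidableEq n] (M : Matrix ι n ℚ) (z : n → ℝ)
    (hz : (M.map fun x : ℚ => (x : ℝ)).mulVec z = 0) :
    z ∈ Submodule.span ℝ {w : n → ℝ | ∃ q : n → ℚ, M.mulVec q = 0 ∧ w = rcast q} := by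
  classical
  set Mr : Matrix ι n ℝ := M.map fun x : ℚ => (x : ℝ) with hMr
  set fq : (n → ℚ) →ₗ[ℚ] (ι → ℚ) := M.mulVecLin with hfq
  set fr : (n → ℝ) →ₗ[ℝ] (ι → ℝ) := Mr.mulVecLin with hfr
  -- basis of rational kernel
  set kk := Module.finrank ℚ ↥(LinearMap.ker fq) with hkk
  set bK := Module.finBasis ℚ ↥(LinearMap.ker fq) with hbK
  set vK : Fin kk → (n → ℚ) := fun i => ((bK i : n → ℚ)) with hvK
  have hindK : LinearIndependent ℚ vK :=
    bK.linearIndependent.map' (LinearMap.ker fq).subtype (Submodule.ker_subtype _)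
  have hindKr : LinearIndependent ℝ (fun i => rcast (vK i)) := linearIndependent_rcast hindK
  set W : Submodule ℝ (n → ℝ) := Submodule.span ℝ (Set.range fun i => rcast (vK i)) with hW
  have hWK : W ≤ LinearMap.ker fr := by
    rw [hW, Submodule.span_le]
    rintro - ⟨i, rfl⟩
    have h0 : M.mulVec (vK i) = 0 := (bK i).2
    simp only [SetLike.mem_coe, LinearMap.mem_ker, hfr]
    rw [Matrix.mulVecLin_apply, hMr, mulVec_map_cast, h0]
    funext j; simp [rcast]
  -- rank of ranges agree
  set rr := Module.finrank ℚ ↥(LinearMap.range fq) with hrr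
  set bR := Module.finBasis ℚ ↥(LinearMap.range fq) with hbR
  set uR : Fin rr → (ι → ℚ) := fun i => ((bR i : ι → ℚ)) with huR
  have hindR : LinearIndependent ℚ uR :=
    bR.linearIndependent.map' (LinearMap.range fq).subtype (Submodule.ker_subtype _)
  have hindRr : LinearIndependent ℝ (fun i => rcast (uR i)) := linearIndependent_rcast hindR
  have hspan : Submodule.span ℝ (Set.range fun i => rcast (uR i)) = LinearMap.range fr := by
    apply le_antisymm
    · rw [Submodule.span_le]
      rintro - ⟨i, rfl⟩
      obtain ⟨q, hq⟩ := (bR i).2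
      refine ⟨rcast q, ?_⟩
      rw [hfr, Matrix.mulVecLin_apply, hMr, mulVec_map_cast]
      rw [show M.mulVec q = uR i from hq]
    · have hcol : LinearMap.range fr = Submodule.span ℝ (Set.range Mr.transpose) := by
        rw [hfr]; exact Matrix.range_mulVecLin Mr
      rw [hcol, Submodule.span_le]
      rintro - ⟨j, rfl⟩
      -- the j-th column of Mr is the cast of the j-th column of M
      have hcolq : Mr.transpose j = rcast (M.transpose j) := by
        funext i; simp [hMr, rcast, Matrix.map_apply]
      have hmem : M.transpose j ∈ LinearMap.range fq := by
        refine ⟨Pi.single j 1, ?_⟩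
        rw [hfq, Matrix.mulVecLin_apply]
        funext i
        simp [Matrix.mulVec, dotProduct, Pi.single_apply]
      -- express column in the rational basis
      set e : ↥(LinearMap.range fq) := ⟨M.transpose j, hmem⟩ with he
      have hrepr : ∑ i, bR.repr e i • bR i = e := bR.sum_repr e
      have hval : M.transpose j = ∑ i, bR.repr e i • uR i := by
        simp only [huR]
        calc M.transpose j = (e : ι → ℚ) := rfl
          _ = ((∑ i, bR.repr e i • bR i : ↥(LinearMap.range fq)) : ι → ℚ) := by rw [hrepr]
          _ = ∑ i, bR.repr e i • (bR i : ι → ℚ) := by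
              rw [Submodule.coe_sum]
              exact Finset.sum_congr rfl fun i _ => rfl
      rw [SetLike.mem_coe, hcolq, hval, rcast_sum_smul]
      exact Submodule.sum_smul_mem _ _ fun i _ => Submodule.subset_span ⟨i, rfl⟩
  have hrange_r : Module.finrank ℝ ↥(LinearMap.range fr) = rr := by
    rw [← hspan, finrank_span_eq_card hindRr, Fintype.card_fin]
  have hnq : rr + kk = Fintype.card n := by
    have h6 := LinearMap.finrank_range_add_finrank_ker fq
    rwa [Module.finrank_pi] at h6
  have hnr : rr + Module.finrank ℝ ↥(LinearMap.ker fr) = Fintype.card n := by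
    have h7 := LinearMap.finrank_range_add_finrank_ker fr
    rwa [Module.finrank_pi, hrange_r] at h7
  have hkerr : Module.finrank ℝ ↥(LinearMap.ker fr) = kk := by omega
  have hWker : W = LinearMap.ker fr :=
    Submodule.eq_of_le_of_finrank_eq hWK
      (by rw [hkerr, hW, finrank_span_eq_card hindKr, Fintype.card_fin])
  have hzW : z ∈ W := by
    rw [hWker]
    exact LinearMap.mem_ker.mpr (by rw [hfr, Matrix.mulVecLin_apply]; exact hz)
  refine Submodule.span_mono ?_ hzW
  rintro - ⟨i, rfl⟩
  exact ⟨vK i, (bK i).2, rfl⟩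


/-- If a linear functional vanishes on all rational kernel vectors, it vanishes on the real
kernel. -/
lemma sum_eq_zero_of_rat_ker {ι n : Type*} [Fintype ι] [Fintype n] [DecidableEq ι] [DecidableEq n]
    (M : Matrix ι n ℚ) (L : n → ℝ)
    (hL : ∀ q : n → ℚ, M.mulVec q = 0 → ∑ j, (q j : ℝ) * L j = 0)
    {z : n → ℝ} (hz : (M.map fun x : ℚ => (x : ℝ)).mulVec z = 0) : ∑ j, z j * L j = 0 := by
  classical
  set f : (n → ℝ) →ₗ[ℝ] ℝ :=
    { toFun := fun w => ∑ j, w j * L j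
      map_add' := by intro a b; simp [add_mul, Finset.sum_add_distrib]
      map_smul' := by intro c a; simp [Finset.mul_sum, mul_assoc] } with hf
  have hle : Submodule.span ℝ {w : n → ℝ | ∃ q : n → ℚ, M.mulVec q = 0 ∧ w = rcast q} ≤
      LinearMap.ker f := by
    rw [Submodule.span_le]
    rintro - ⟨q, hq, rfl⟩
    exact LinearMap.mem_ker.mpr (hL q hq)
  exact LinearMap.mem_ker.mp (hle (real_ker_le_span_rat_ker M z hz))

/-- A vector orthogonal to the kernel of `B` lies in the row space of `B`. -/
lemma exists_row_combination {dd n : ℕ} (B : Matrix (Fin dd) (Fin n) ℝ) (L : Fin n → ℝ)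
    (h : ∀ z : Fin n → ℝ, B.mulVec z = 0 → ∑ j, z j * L j = 0) :
    ∃ w : Fin dd → ℝ, ∀ j, ∑ i, B i j * w i = L j := by
  classical
  set v : Fin dd → EuclideanSpace ℝ (Fin n) :=
    fun i => (WithLp.equiv 2 (Fin n → ℝ)).symm (B i) with hv
  set LE : EuclideanSpace ℝ (Fin n) := (WithLp.equiv 2 (Fin n → ℝ)).symm L with hLE
  set V : Submodule ℝ (EuclideanSpace ℝ (Fin n)) := Submodule.span ℝ (Set.range v) with hV
  obtain ⟨p, hp, q, hq, hL⟩ := V.exists_add_mem_mem_orthogonal LE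
  have hq0 : B.mulVec (WithLp.equiv 2 (Fin n → ℝ) q) = 0 := by
    funext i
    have hi : v i ∈ V := Submodule.subset_span ⟨i, rfl⟩
    have h2 := (Submodule.mem_orthogonal V q).mp hq _ hi
    simpa [hv, Matrix.mulVec, dotProduct, PiLp.inner_apply, RCLike.inner_apply, mul_comm] using h2
  have hzero := h _ hq0
  have hinner : (inner ℝ q LE : ℝ) = ∑ j, q j * L j := by
    rw [PiLp.inner_apply]
    exact Finset.sum_congr rfl fun j _ => by simp [hLE, RCLike.inner_apply, mul_comm]
  have hqp : (inner ℝ q p : ℝ) = 0 := by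
    have := (Submodule.mem_orthogonal V q).mp hq p hp
    rwa [real_inner_comm] at this
  have hq2 : (inner ℝ q q : ℝ) = 0 := by
    have h3 : (inner ℝ q LE : ℝ) = inner ℝ q p + inner ℝ q q := by
      rw [hL, inner_add_right]
    rw [hinner] at h3
    rw [hqp, zero_add] at h3
    rw [← h3]
    exact hzero
  have hq0' : q = 0 := inner_self_eq_zero.mp hq2
  have hLV : LE ∈ V := by rw [hL, hq0', add_zero]; exact hp
  rw [hV] at hLV
  obtain ⟨w, hw⟩ := (Submodule.mem_span_range_iff_exists_fun ℝ).mp hLV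
  refine ⟨w, fun j => ?_⟩
  set eqv := WithLp.linearEquiv 2 ℝ (Fin n → ℝ) with heqv
  have hw2 : ∑ i, w i • B i = L := by
    have h4 := congrArg eqv hw
    rw [map_sum] at h4
    simpa [heqv, hv, hLE] using h4
  have h5 := congrFun hw2 j
  rw [Finset.sum_apply] at h5
  simp only [Pi.smul_apply, smul_eq_mul] at h5
  rw [← h5]
  exact Finset.sum_congr rfl fun i _ => mul_comm _ _

lemma sum_of_support {ι : Type*} [Fintype ι] {E : Type*} [AddCommMonoid E] (s : Finset ι)
    (f : ι → E) (h : ∀ i ∉ s, f i = 0) : ∑ i, f i = ∑ i : s, f i.1 := by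
  rw [Finset.sum_coe_sort s f]
  exact (Finset.sum_subset (Finset.subset_univ s) (fun i _ hi => h i hi)).symm

/-- Conical Carathéodory: any conic combination can be rewritten using a linearly
independent subfamily. -/
lemma caratheodory_cone {ι : Type*} [Fintype ι] [DecidableEq ι] {E : Type*} [AddCommGroup E]
    [Module ℝ E] (b : ι → E) (s : Finset ι) :
    ∀ (lam : ι → ℝ), (∀ i, 0 ≤ lam i) → (∀ i ∉ s, lam i = 0) →
    ∃ (s' : Finset ι) (lam' : ι → ℝ), s' ⊆ s ∧ (∀ i, 0 ≤ lam' i) ∧ (∀ i ∉ s', lam' i = 0) ∧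
      ∑ i, lam' i • b i = ∑ i, lam i • b i ∧ LinearIndependent ℝ (fun i : s' => b i.1) := by
  classical
  induction s using Finset.strongInduction with
  | _ s ih =>
    intro lam h0 hsupp
    by_cases hind : LinearIndependent ℝ (fun i : s => b i.1)
    · exact ⟨s, lam, subset_rfl, h0, hsupp, rfl, hind⟩
    obtain ⟨g, hg, i₁, hi₁⟩ := Fintype.not_linearIndependent_iff.mp hind
    set c₀ : ι → ℝ := fun i => if h : i ∈ s then g ⟨i, h⟩ else 0 with hc₀
    have hc₀supp : ∀ i ∉ s, c₀ i = 0 := fun i hi => by simp [hc₀, dif_neg hi]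
    have hcs₀ : ∑ i, c₀ i • b i = 0 := by
      rw [sum_of_support s _ (fun i hi => by rw [hc₀supp i hi, zero_smul])]
      rw [← hg]
      exact Finset.sum_congr rfl fun i _ => by simp [hc₀, dif_pos i.2]
    have key : ∀ c : ι → ℝ, (∀ i ∉ s, c i = 0) → ∑ i, c i • b i = 0 → (∃ i ∈ s, 0 < c i) →
        ∃ (s' : Finset ι) (lam' : ι → ℝ), s' ⊆ s ∧ (∀ i, 0 ≤ lam' i) ∧ (∀ i ∉ s', lam' i = 0) ∧
          ∑ i, lam' i • b i = ∑ i, lam i • b i ∧ LinearIndependent ℝ (fun i : s' => b i.1) := by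
      rintro c hcsupp hcz ⟨i₂, hi₂s, hi₂pos⟩
      set T := s.filter (fun i => 0 < c i) with hT
      have hTne : T.Nonempty := ⟨i₂, by simp [hT, hi₂s, hi₂pos]⟩
      obtain ⟨i₀, hi₀T, hmin⟩ := T.exists_min_image (fun i => lam i / c i) hTne
      have hi₀s : i₀ ∈ s := (Finset.mem_filter.mp hi₀T).1
      have hc₀pos : 0 < c i₀ := (Finset.mem_filter.mp hi₀T).2
      set r := lam i₀ / c i₀ with hr
      have hr0 : 0 ≤ r := div_nonneg (h0 i₀) hc₀pos.le
      set lam2 : ι → ℝ := fun i => lam i - r * c i with hlam2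
      have h02 : ∀ i, 0 ≤ lam2 i := by
        intro i
        by_cases hiT : i ∈ T
        · have hci : 0 < c i := (Finset.mem_filter.mp hiT).2
          have h6 := hmin i hiT
          have h7 : r * c i ≤ lam i := (le_div_iff₀ hci).mp h6
          simp only [hlam2]; linarith
        · have hci : c i ≤ 0 := by
            by_cases his : i ∈ s
            · by_contra h'
              push_neg at h'
              exact hiT (Finset.mem_filter.mpr ⟨his, h'⟩)
            · rw [hcsupp i his]
          have h8 : r * c i ≤ 0 := mul_nonpos_of_nonneg_of_nonpos hr0 hci
          have h9 := h0 i
          simp only [hlam2]; linarith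
      have hsupp2 : ∀ i ∉ s.erase i₀, lam2 i = 0 := by
        intro i hi
        by_cases his : i ∈ s
        · have hii : i = i₀ := by
            by_contra hne
            exact hi (Finset.mem_erase.mpr ⟨hne, his⟩)
          subst hii
          simp only [hlam2, hr]
          rw [div_mul_cancel₀ _ hc₀pos.ne']
          ring
        · simp only [hlam2]
          rw [hsupp i his, hcsupp i his]
          ring
      have hsum2 : ∑ i, lam2 i • b i = ∑ i, lam i • b i := by
        simp only [hlam2, sub_smul]
        rw [Finset.sum_sub_distrib]
        have h10 : ∑ i, (r * c i) • b i = r • ∑ i, c i • b i := by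
          rw [Finset.smul_sum]
          exact Finset.sum_congr rfl fun i _ => (smul_smul r (c i) (b i)).symm
        rw [h10, hcz, smul_zero, sub_zero]
      obtain ⟨s', lam', hsub, h0', hsupp', hsum', hind'⟩ :=
        ih (s.erase i₀) (Finset.erase_ssubset hi₀s) lam2 h02 hsupp2
      exact ⟨s', lam', hsub.trans (Finset.erase_subset _ _), h0', hsupp',
        by rw [hsum', hsum2], hind'⟩
    rcases lt_or_gt_of_ne hi₁ with hneg | hpos
    · refine key (fun i => -c₀ i) (fun i hi => by show -c₀ i = 0; rw [hc₀supp i hi, neg_zero])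
        (by simp only [neg_smul]; rw [Finset.sum_neg_distrib, hcs₀, neg_zero]) ⟨i₁, i₁.2, ?_⟩
      show (0:ℝ) < -c₀ (i₁ : ι)
      have : c₀ (i₁ : ι) = g i₁ := by simp [hc₀, dif_pos i₁.2]
      rw [this]
      linarith
    · refine key c₀ hc₀supp hcs₀ ⟨i₁, i₁.2, ?_⟩
      have : c₀ (i₁ : ι) = g i₁ := by simp [hc₀, dif_pos i₁.2]
      rw [this]
      linarith


/-- If a rational vector is a real conic combination of rational vectors, it is a rational
conic combination. -/
lemma rational_conic_rep {dd : ℕ} {ι : Type*} [Fintype ι] [DecidableEq ι]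
    (bq : ι → Fin dd → ℚ) (s₀ : Finset ι) (y : Fin dd → ℚ)
    (h : ∃ lam : ι → ℝ, (∀ i, 0 ≤ lam i) ∧ (∀ i ∉ s₀, lam i = 0) ∧
      rcast y = ∑ i, lam i • rcast (bq i)) :
    ∃ q : ι → ℚ, (∀ i, 0 ≤ q i) ∧ (∀ i ∉ s₀, q i = 0) ∧ ∀ j, y j = ∑ i, q i * bq i j := by
  classical
  obtain ⟨lam, h0, hsupp, hrep0⟩ := h
  obtain ⟨s', lam', hsub, h0', hsupp', hsum', hind'⟩ :=
    caratheodory_cone (fun i => rcast (bq i)) s₀ lam h0 hsupp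
  have hrep : rcast y = ∑ i, lam' i • rcast (bq i) := by rw [hrep0, ← hsum']
  -- pointwise version restricted to s'
  have hrepj : ∀ r, (y r : ℝ) = ∑ i : ↥s', lam' i.1 * (bq i.1 r : ℝ) := by
    intro r
    have h1 := congrFun hrep r
    rw [Finset.sum_apply] at h1
    simp only [Pi.smul_apply, smul_eq_mul] at h1
    rw [show (∑ i, lam' i * rcast (bq i) r) = ∑ i : ↥s', lam' i.1 * rcast (bq i.1) r from
      sum_of_support s' _ (fun i hi => by rw [hsupp' i hi, zero_mul])] at h1
    exact h1
  -- augmented matrix over `Option ↥s'`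
  set C : Matrix (Fin dd) (Option ↥s') ℚ :=
    fun r o => Option.elim o (-(y r)) (fun i => bq i.1 r) with hC
  set z : Option ↥s' → ℝ := fun o => Option.elim o 1 (fun i => lam' i.1) with hz
  have hker : (C.map fun x : ℚ => (x : ℝ)).mulVec z = 0 := by
    funext r
    show ∑ o, (C r o : ℝ) * z o = 0
    rw [Fintype.sum_option]
    simp only [hC, hz, Option.elim]
    push_cast
    rw [show ∑ i : ↥s', (bq i.1 r : ℝ) * lam' i.1 = ∑ i : ↥s', lam' i.1 * (bq i.1 r : ℝ) from
      Finset.sum_congr rfl fun i _ => mul_comm _ _]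
    rw [← hrepj r]
    ring
  have hexists : ∃ q0 : Option ↥s' → ℚ, C.mulVec q0 = 0 ∧ q0 none ≠ 0 := by
    by_contra hno
    push_neg at hno
    have hmem := real_ker_le_span_rat_ker C z hker
    have hzero : z none = 0 := by
      set f : (Option ↥s' → ℝ) →ₗ[ℝ] ℝ := LinearMap.proj none with hf
      have hle : Submodule.span ℝ
          {w : Option ↥s' → ℝ | ∃ q : Option ↥s' → ℚ, C.mulVec q = 0 ∧ w = rcast q} ≤
          LinearMap.ker f := by
        rw [Submodule.span_le]
        rintro - ⟨q0, hq0, rfl⟩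
        show (q0 none : ℝ) = 0
        rw [hno q0 hq0]
        norm_num
      exact hle hmem
    rw [hz] at hzero
    norm_num at hzero
  obtain ⟨q0, hq0ker, hq0ne⟩ := hexists
  set qi : ↥s' → ℚ := fun i => q0 (some i) / q0 none with hqi
  have hkr : ∀ r, ∑ i : ↥s', bq i.1 r * q0 (some i) = y r * q0 none := by
    intro r
    have h2 := congrFun hq0ker r
    show _ = _
    have h3 : ∑ o, C r o * q0 o = 0 := h2
    rw [Fintype.sum_option] at h3
    simp only [hC, Option.elim] at h3
    linarith
  have hyr : ∀ r, y r = ∑ i : ↥s', qi i * bq i.1 r := by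
    intro r
    simp only [hqi, div_mul_eq_mul_div]
    rw [← Finset.sum_div]
    rw [show ∑ i : ↥s', q0 (some i) * bq i.1 r = ∑ i : ↥s', bq i.1 r * q0 (some i) from
      Finset.sum_congr rfl fun i _ => mul_comm _ _]
    rw [hkr r]
    field_simp
  have huniq : ∀ i : ↥s', lam' i.1 = (qi i : ℝ) := by
    have hdiff : ∑ i : ↥s', (lam' i.1 - (qi i : ℝ)) • rcast (bq i.1) = 0 := by
      simp only [sub_smul]
      rw [Finset.sum_sub_distrib]
      have e1 : ∑ i : ↥s', lam' i.1 • rcast (bq i.1) = rcast y := by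
        rw [hrep, sum_of_support s' _ (fun i hi => by rw [hsupp' i hi, zero_smul])]
      have e2 : ∑ i : ↥s', (qi i : ℝ) • rcast (bq i.1) = rcast y := by
        funext r
        rw [Finset.sum_apply]
        simp only [Pi.smul_apply, smul_eq_mul, rcast]
        rw [show (y r : ℝ) = ((∑ i : ↥s', qi i * bq i.1 r : ℚ) : ℝ) from by rw [← hyr r]]
        push_cast
        rfl
      rw [e1, e2, sub_self]
    intro i
    have := Fintype.linearIndependent_iff.mp hind' _ hdiff i
    linarith [this]
  set q : ι → ℚ := fun i => if h : i ∈ s' then qi ⟨i, h⟩ else 0 with hq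
  refine ⟨q, ?_, ?_, ?_⟩
  · intro i
    by_cases hi : i ∈ s'
    · have : (0:ℝ) ≤ (qi ⟨i, hi⟩ : ℝ) := by rw [← huniq ⟨i, hi⟩]; exact h0' i
      have h4 : (0:ℚ) ≤ qi ⟨i, hi⟩ := by exact_mod_cast this
      simp [hq, dif_pos hi, h4]
    · simp [hq, dif_neg hi]
  · intro i hi
    have : i ∉ s' := fun h' => hi (hsub h')
    simp [hq, dif_neg this]
  · intro j
    rw [sum_of_support s' (fun i => q i * bq i j)
      (fun i hi => by simp [hq, dif_neg hi])]
    rw [hyr j]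
    exact Finset.sum_congr rfl fun i _ => by simp [hq, dif_pos i.2]


/-- Farkas-type separation: if the rational vector `y` is not a conic combination (with
support in `s₀`) of the vectors `bq`, then a separating linear functional exists. -/
lemma cone_separation {dd : ℕ} {ι : Type*} [Fintype ι] [DecidableEq ι]
    (bq : ι → Fin dd → ℚ) (s₀ : Finset ι) (y : Fin dd → ℚ)
    (hno : ∀ lam : ι → ℝ, (∀ i, 0 ≤ lam i) → (∀ i ∉ s₀, lam i = 0) →
      rcast y ≠ ∑ i, lam i • rcast (bq i)) :
    ∃ cc : Fin dd → ℝ, (∀ i ∈ s₀, 0 ≤ ∑ r, (bq i r : ℝ) * cc r) ∧ ∑ r, (y r : ℝ) * cc r < 0 := by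
  classical
  set br : ι → EuclideanSpace ℝ (Fin dd) :=
    fun i => (WithLp.equiv 2 (Fin dd → ℝ)).symm (rcast (bq i)) with hbr
  set yE : EuclideanSpace ℝ (Fin dd) := (WithLp.equiv 2 (Fin dd → ℝ)).symm (rcast y) with hyE
  set K : ConvexCone ℝ (EuclideanSpace ℝ (Fin dd)) :=
    { carrier := {x | ∃ lam : ι → ℝ, (∀ i, 0 ≤ lam i) ∧ (∀ i ∉ s₀, lam i = 0) ∧
        x = ∑ i, lam i • br i}
      smul_mem' := by
        rintro c hc x ⟨lam, h0, hs, rfl⟩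
        refine ⟨fun i => c * lam i, fun i => mul_nonneg hc.le (h0 i),
          fun i hi => by show c * lam i = 0; rw [hs i hi, mul_zero], ?_⟩
        show c • ∑ i, lam i • br i = ∑ i, (c * lam i) • br i
        rw [Finset.smul_sum]
        exact Finset.sum_congr rfl fun i _ => smul_smul c (lam i) (br i)
      add_mem' := by
        rintro x ⟨lam, h0, hs, rfl⟩ x' ⟨mu, h0', hs', rfl⟩
        refine ⟨fun i => lam i + mu i, fun i => add_nonneg (h0 i) (h0' i),
          fun i hi => by show lam i + mu i = 0; rw [hs i hi, hs' i hi, add_zero], ?_⟩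
        show (∑ i, lam i • br i) + ∑ i, mu i • br i = ∑ i, (lam i + mu i) • br i
        rw [← Finset.sum_add_distrib]
        exact Finset.sum_congr rfl fun i _ => (add_smul _ _ _).symm } with hK
  set Cset : Finset ι → Set (EuclideanSpace ℝ (Fin dd)) := fun s =>
    {x | ∃ lam : ι → ℝ, (∀ i, 0 ≤ lam i) ∧ (∀ i ∉ s, lam i = 0) ∧ x = ∑ i, lam i • br i}
    with hCset
  have hCclosed : ∀ s : Finset ι, LinearIndependent ℝ (fun i : s => br i.1) →
      IsClosed (Cset s) := by
    intro s hind
    set T : Set (↥s → ℝ) := {f | ∀ i, 0 ≤ f i} with hT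
    have hTclosed : IsClosed T := by
      have : T = ⋂ i, {f : ↥s → ℝ | 0 ≤ f i} := by
        ext f; simp [hT, Set.mem_iInter]
      rw [this]
      exact isClosed_iInter fun i => isClosed_le continuous_const (continuous_apply i)
    set Φ : (↥s → ℝ) →ₗ[ℝ] EuclideanSpace ℝ (Fin dd) :=
      { toFun := fun f => ∑ i : ↥s, f i • br i.1
        map_add' := by
          intro a b
          show ∑ i : ↥s, (a + b) i • br i.1 =
            (∑ i : ↥s, a i • br i.1) + ∑ i : ↥s, b i • br i.1
          rw [← Finset.sum_add_distrib]
          exact Finset.sum_congr rfl fun i _ => by rw [Pi.add_apply, add_smul]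
        map_smul' := by
          intro c a
          show ∑ i : ↥s, (c • a) i • br i.1 = c • ∑ i : ↥s, a i • br i.1
          rw [Finset.smul_sum]
          exact Finset.sum_congr rfl fun i _ => by
            rw [Pi.smul_apply, smul_eq_mul, ← smul_smul] } with hΦ
    have hker : LinearMap.ker Φ = ⊥ := by
      rw [LinearMap.ker_eq_bot']
      intro f hf
      funext i
      exact Fintype.linearIndependent_iff.mp hind f hf i
    have hembed := LinearMap.isClosedEmbedding_of_injective hker
    have himg : Cset s = Φ '' T := by
      ext x
      constructor
      · rintro ⟨lam, h0, hsupp, rfl⟩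
        refine ⟨fun i => lam i.1, fun i => h0 i.1, ?_⟩
        show ∑ i : ↥s, lam i.1 • br i.1 = ∑ i, lam i • br i
        exact (sum_of_support s (fun i => lam i • br i)
          (fun i hi => by show lam i • br i = 0; rw [hsupp i hi, zero_smul])).symm
      · rintro ⟨f, hfT, rfl⟩
        refine ⟨fun i => if h : i ∈ s then f ⟨i, h⟩ else 0,
          fun i => ?_, fun i hi => by simp [hi], ?_⟩
        · by_cases h : i ∈ s
          · simpa [h] using hfT ⟨i, h⟩
          · simp [h]
        · show Φ f = _
          show ∑ i : ↥s, f i • br i.1 = _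
          rw [sum_of_support s (fun i => (if h : i ∈ s then f ⟨i, h⟩ else 0) • br i)
            (fun i hi => by simp [hi])]
          exact Finset.sum_congr rfl fun i _ => by rw [dif_pos i.2]
    rw [himg]
    exact hembed.isClosedMap _ hTclosed
  have hKunion : (K : Set (EuclideanSpace ℝ (Fin dd))) =
      ⋃ (s : {s : Finset ι // s ⊆ s₀ ∧ LinearIndependent ℝ (fun i : s => br i.1)}),
        Cset s.1 := by
    ext x
    constructor
    · rintro ⟨lam, h0, hsupp, rfl⟩
      obtain ⟨s', lam', hsub, h0', hsupp', hsum', hind'⟩ :=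
        caratheodory_cone br s₀ lam h0 hsupp
      exact Set.mem_iUnion.mpr ⟨⟨s', hsub, hind'⟩, ⟨lam', h0', hsupp', hsum'.symm⟩⟩
    · intro hx
      obtain ⟨⟨s, hsub, _⟩, lam, h0, hsupp, rfl⟩ := Set.mem_iUnion.mp hx
      exact ⟨lam, h0, fun i hi => hsupp i (fun hin => hi (hsub hin)), rfl⟩
  have hclosed : IsClosed (K : Set (EuclideanSpace ℝ (Fin dd))) := by
    rw [hKunion]
    exact isClosed_iUnion_of_finite fun s => hCclosed s.1 s.2.2
  have hne : (K : Set (EuclideanSpace ℝ (Fin dd))).Nonempty := by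
    refine ⟨0, ⟨fun _ => 0, fun _ => le_rfl, fun _ _ => rfl, ?_⟩⟩
    simp
  have hnmem : yE ∉ K := by
    rintro ⟨lam, h0, hsupp, heq⟩
    apply hno lam h0 hsupp
    have h4 := congrArg (WithLp.linearEquiv 2 ℝ (Fin dd → ℝ)) heq
    rw [map_sum] at h4
    simpa [hbr, hyE] using h4
  obtain ⟨cy, hcy1, hcy2⟩ : ∃ y, (∀ x ∈ K, 0 ≤ inner ℝ x y) ∧ inner ℝ yE y < 0 :=
    ProperCone.hyperplane_separation'
      ⟨K.toPointedCone (ConvexCone.Pointed.of_nonempty_of_isClosed hne hclosed), hclosed⟩ hnmem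
  refine ⟨fun r => cy r, ?_, ?_⟩
  · intro i hi
    have hmem : br i ∈ K := by
      refine ⟨fun i' => if i' = i then 1 else 0, fun i' => by positivity,
        fun i' hi' => ?_, ?_⟩
      · show (if i' = i then (1:ℝ) else 0) = 0
        rw [if_neg]
        rintro rfl
        exact hi' hi
      · simp [ite_smul]
    have h5 := hcy1 _ hmem
    rw [PiLp.inner_apply] at h5
    refine le_trans h5 (le_of_eq ?_)
    refine Finset.sum_congr rfl fun r _ => ?_
    simp [hbr, RCLike.inner_apply, rcast, mul_comm]
  · have h6 := hcy2
    rw [PiLp.inner_apply] at h6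
    refine lt_of_le_of_lt (le_of_eq ?_) h6
    refine Finset.sum_congr rfl fun r _ => ?_
    simp [hyE, RCLike.inner_apply, rcast, mul_comm]

/-- Limit factorization theorem: The nonnegative toric variety `X_A` equals
the topological closure of the image of the monomial map `φ_A` on the nonnegative orthant. -/
theorem toric_variety_eq_closure_image {d m : ℕ} (A : Matrix (Fin d) (Fin m) ℕ) :
    {x : Fin m → ℝ | (∀ j, 0 ≤ x j) ∧
        ∀ u v : Fin m → ℕ, (∀ i, ∑ j, A i j * u j = ∑ j, A i j * v j) →
          ∏ j, x j ^ u j = ∏ j, x j ^ v j} =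
      closure ((fun (t : Fin d → ℝ) (j : Fin m) => ∏ i, t i ^ A i j) ''
        {t : Fin d → ℝ | ∀ i, 0 ≤ t i}) := by
  classical
  apply Set.Subset.antisymm
  · -- hard direction: X_A ⊆ closure of image
    rintro x ⟨hx0, hrel⟩
    have hxpos : ∀ j, x j ≠ 0 → 0 < x j := fun j hj => lt_of_le_of_ne (hx0 j) (Ne.symm hj)
    -- Step B : find w with ∑ i, A i j * w i = log (x j) on the support
    set Bq : Matrix (Fin d) (Fin m) ℚ := Matrix.of fun i j => if x j = 0 then 0 else (A i j : ℚ)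
      with hBq
    set L : Fin m → ℝ := fun j => if x j = 0 then 0 else Real.log (x j) with hL
    have hLker : ∀ q : Fin m → ℚ, Bq.mulVec q = 0 → ∑ j, (q j : ℝ) * L j = 0 := by
      intro q hq
      set q' : Fin m → ℚ := fun j => if x j = 0 then 0 else q j with hq'
      have hkerq' : ∀ i, ∑ j, (A i j : ℚ) * q' j = 0 := by
        intro i
        have h7 := congrFun hq i
        simp only [Matrix.mulVec, dotProduct, Pi.zero_apply] at h7
        rw [← h7]
        refine Finset.sum_congr rfl fun j _ => ?_
        by_cases h : x j = 0 <;> simp [hq', hBq, h]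
      obtain ⟨N, hN, hz⟩ := exists_int_scaling q'
      choose zf hzf using hz
      set u : Fin m → ℕ := fun j => (zf j).toNat with hu
      set v : Fin m → ℕ := fun j => (-(zf j)).toNat with hv
      have huv : ∀ j, (u j : ℚ) - (v j : ℚ) = ((zf j : ℤ) : ℚ) := by
        intro j
        have h8 := Int.toNat_sub_toNat_neg (zf j)
        exact_mod_cast congrArg (fun r : ℤ => (r : ℚ)) h8
      have hrelA : ∀ i, ∑ j, A i j * u j = ∑ j, A i j * v j := by
        intro i
        have hq8 : (∑ j, ((A i j : ℚ) * u j)) - ∑ j, ((A i j : ℚ) * v j) = 0 := by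
          rw [← Finset.sum_sub_distrib]
          have h9 : ∀ j, (A i j : ℚ) * u j - (A i j : ℚ) * v j = N * ((A i j : ℚ) * q' j) := by
            intro j
            rw [← mul_sub, huv j, ← hzf j]
            ring
          rw [Finset.sum_congr rfl fun j _ => h9 j, ← Finset.mul_sum, hkerq' i, mul_zero]
        have h10 : ((∑ j, A i j * u j : ℕ) : ℚ) = ((∑ j, A i j * v j : ℕ) : ℚ) := by
          push_cast
          linarith [hq8]
        exact_mod_cast h10
      have hprod := hrel u v hrelA
      have hu0 : ∀ j, x j = 0 → u j = 0 := by
        intro j hj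
        have h11 : ((zf j : ℤ) : ℚ) = 0 := by rw [← hzf j]; simp [hq', hj]
        have hz0 : zf j = 0 := by exact_mod_cast h11
        simp [hu, hz0]
      have hv0 : ∀ j, x j = 0 → v j = 0 := by
        intro j hj
        have h11 : ((zf j : ℤ) : ℚ) = 0 := by rw [← hzf j]; simp [hq', hj]
        have hz0 : zf j = 0 := by exact_mod_cast h11
        simp [hv, hz0]
      have hneu : ∀ j, x j ^ u j ≠ 0 := by
        intro j
        by_cases h : x j = 0
        · rw [hu0 j h, pow_zero]; norm_num
        · exact pow_ne_zero _ h
      have hnev : ∀ j, x j ^ v j ≠ 0 := by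
        intro j
        by_cases h : x j = 0
        · rw [hv0 j h, pow_zero]; norm_num
        · exact pow_ne_zero _ h
      have hlog := congrArg Real.log hprod
      rw [Real.log_prod (fun j _ => hneu j), Real.log_prod (fun j _ => hnev j)] at hlog
      simp only [Real.log_pow] at hlog
      have hsum : ∑ j, ((N : ℝ) * ((q j : ℝ) * L j)) = 0 := by
        have h12 : ∀ j, (N : ℝ) * ((q j : ℝ) * L j) =
            (u j : ℝ) * Real.log (x j) - (v j : ℝ) * Real.log (x j) := by
          intro j
          by_cases h : x j = 0
          · rw [hu0 j h, hv0 j h]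
            simp [hL, h]
          · have e1 : ((zf j : ℤ) : ℝ) = (u j : ℝ) - (v j : ℝ) := by
              exact_mod_cast congrArg (fun r : ℚ => (r : ℝ)) (huv j).symm
            have e2 : (q j : ℝ) * (N : ℝ) = ((zf j : ℤ) : ℝ) := by
              have := congrArg (fun r : ℚ => (r : ℝ)) (hzf j)
              push_cast at this
              rw [← this]
              simp [hq', h]
            have e3 : L j = Real.log (x j) := by simp [hL, h]
            rw [e3, ← sub_mul, ← e1, ← e2]
            ring
        rw [Finset.sum_congr rfl fun j _ => h12 j, Finset.sum_sub_distrib, hlog, sub_self]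
      rw [← Finset.mul_sum] at hsum
      have hN0 : (N : ℝ) ≠ 0 := by positivity
      exact (mul_eq_zero.mp hsum).resolve_left hN0
    obtain ⟨w, hw⟩ := exists_row_combination (Bq.map fun r : ℚ => (r : ℝ)) L
      (fun z hz => sum_eq_zero_of_rat_ker Bq L hLker hz)
    have hwS : ∀ j, x j ≠ 0 → ∑ i, (A i j : ℝ) * w i = Real.log (x j) := by
      intro j hj
      have h13 := hw j
      rw [show L j = Real.log (x j) from by simp [hL, hj]] at h13
      rw [← h13]
      refine Finset.sum_congr rfl fun i _ => ?_
      simp [hBq, Matrix.map_apply, hj]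
    -- Step C : separating directions for zero coordinates
    have hstepC : ∀ k : Fin m, x k = 0 → ∃ cc : Fin d → ℝ,
        (∀ j, x j ≠ 0 → ∑ i, (A i j : ℝ) * cc i = 0) ∧
        (∀ j, 0 ≤ ∑ i, (A i j : ℝ) * cc i) ∧ 0 < ∑ i, (A i k : ℝ) * cc i := by
      intro k hk
      set bq : (Fin m ⊕ Fin m) → Fin d → ℚ :=
        Sum.elim (fun j r => (A r j : ℚ)) (fun j r => -(A r j : ℚ)) with hbq
      set s₀ : Finset (Fin m ⊕ Fin m) :=
        Finset.univ.filter (fun o => Sum.elim (fun _ => True) (fun j => x j ≠ 0) o) with hs₀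
      set yy : Fin d → ℚ := fun r => -(A r k : ℚ) with hyy
      have hno : ∀ lam : (Fin m ⊕ Fin m) → ℝ, (∀ i, 0 ≤ lam i) → (∀ i ∉ s₀, lam i = 0) →
          rcast yy ≠ ∑ i, lam i • rcast (bq i) := by
        intro lam h0 hsupp heq
        obtain ⟨q, hq0, hqsupp, hqrep⟩ := rational_conic_rep bq s₀ yy ⟨lam, h0, hsupp, heq⟩
        obtain ⟨N, hN, hz⟩ := exists_int_scaling q
        choose zf hzf using hz
        have hznn : ∀ i, 0 ≤ zf i := by
          intro i
          have h14 : (0 : ℚ) ≤ ((zf i : ℤ) : ℚ) := by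
            rw [← hzf i]
            have := hq0 i
            positivity
          exact_mod_cast h14
        set nq : (Fin m ⊕ Fin m) → ℕ := fun i => (zf i).toNat with hnq
        have hnn : ∀ i, ((nq i : ℕ) : ℚ) = q i * N := by
          intro i
          have h1 : ((zf i).toNat : ℤ) = zf i := Int.toNat_of_nonneg (hznn i)
          have h2 : (((zf i).toNat : ℤ) : ℚ) = ((zf i : ℤ) : ℚ) := by exact_mod_cast h1
          rw [hnq]
          rw [show (((zf i).toNat : ℕ) : ℚ) = (((zf i).toNat : ℤ) : ℚ) from by push_cast; ring]
          rw [h2, ← hzf i]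
        set u : Fin m → ℕ := fun j => nq (Sum.inl j) + (if j = k then N else 0) with hu2
        set v : Fin m → ℕ := fun j => nq (Sum.inr j) with hv2
        have hrelA : ∀ r, ∑ j, A r j * u j = ∑ j, A r j * v j := by
          intro r
          have h9 := hqrep r
          rw [Fintype.sum_sum_type] at h9
          simp only [hbq, Sum.elim_inl, Sum.elim_inr, hyy] at h9
          -- h9 : -(A r k) = ∑ j, q (inl j) * A r j + ∑ j, q (inr j) * -(A r j)
          have hucast : ∀ j, ((u j : ℕ) : ℚ) = q (Sum.inl j) * N + (if j = k then (N : ℚ) else 0) := by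
            intro j
            have e8 : ((u j : ℕ) : ℚ) =
                ((nq (Sum.inl j) : ℕ) : ℚ) + (((if j = k then N else 0 : ℕ)) : ℚ) := by
              rw [hu2]; push_cast; ring
            rw [e8, hnn]
            congr 1
            by_cases hjk : j = k <;> simp [hjk]
          have hvcast : ∀ j, ((v j : ℕ) : ℚ) = q (Sum.inr j) * N := by
            intro j
            rw [hv2]
            exact hnn _
          have hQ : ∑ j, (A r j : ℚ) * ((u j : ℕ) : ℚ) = ∑ j, (A r j : ℚ) * ((v j : ℕ) : ℚ) := by
            simp only [hucast, hvcast, mul_add]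
            rw [Finset.sum_add_distrib]
            have e4 : ∑ j, (A r j : ℚ) * (if j = k then (N : ℚ) else 0) = (A r k : ℚ) * N := by
              simp [mul_ite, Finset.sum_ite_eq']
            rw [e4]
            have e5 : ∑ j, (A r j : ℚ) * (q (Sum.inl j) * N) =
                N * ∑ j, q (Sum.inl j) * (A r j : ℚ) := by
              rw [Finset.mul_sum]
              exact Finset.sum_congr rfl fun j _ => by ring
            have e6 : ∑ j, (A r j : ℚ) * (q (Sum.inr j) * N) =
                N * ∑ j, q (Sum.inr j) * (A r j : ℚ) := by
              rw [Finset.mul_sum]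
              exact Finset.sum_congr rfl fun j _ => by ring
            rw [e5, e6]
            have e7 : ∑ j, q (Sum.inr j) * (A r j : ℚ) =
                -∑ j, q (Sum.inr j) * -(A r j : ℚ) := by
              rw [← Finset.sum_neg_distrib]
              exact Finset.sum_congr rfl fun j _ => by ring
            rw [e7]
            linear_combination (-(N : ℚ)) * h9
          have h15 : ((∑ j, A r j * u j : ℕ) : ℚ) = ((∑ j, A r j * v j : ℕ) : ℚ) := by
            push_cast
            exact hQ
          exact_mod_cast h15
        have hprod := hrel u v hrelA
        have hv0 : ∀ j, x j = 0 → v j = 0 := by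
          intro j hj
          have hi : (Sum.inr j : Fin m ⊕ Fin m) ∉ s₀ := by simp [hs₀, hj]
          have hq00 : q (Sum.inr j) = 0 := hqsupp _ hi
          have h16 : ((nq (Sum.inr j) : ℕ) : ℚ) = 0 := by rw [hnn, hq00, zero_mul]
          have : nq (Sum.inr j) = 0 := by exact_mod_cast h16
          simp [hv2, this]
        have hright : ∏ j, x j ^ v j ≠ 0 := by
          rw [Finset.prod_ne_zero_iff]
          intro j _
          by_cases h : x j = 0
          · rw [hv0 j h, pow_zero]; norm_num
          · exact pow_ne_zero _ h
        have hleft : ∏ j, x j ^ u j = 0 := by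
          apply Finset.prod_eq_zero (Finset.mem_univ k)
          rw [hk]
          apply zero_pow
          have : u k = nq (Sum.inl k) + N := by simp [hu2]
          omega
        exact hright (hprod ▸ hleft)
      obtain ⟨cc, hcc1, hcc2⟩ := cone_separation bq s₀ yy hno
      have hinl : ∀ j : Fin m, 0 ≤ ∑ i, (A i j : ℝ) * cc i := by
        intro j
        have ha := hcc1 (Sum.inl j) (by simp [hs₀])
        simpa [hbq] using ha
      refine ⟨cc, ?_, hinl, ?_⟩
      · intro j hj
        have ha := hinl j
        have hb := hcc1 (Sum.inr j) (by simp [hs₀, hj])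
        simp only [hbq, Sum.elim_inr] at hb
        have hb' : 0 ≤ -∑ i, (A i j : ℝ) * cc i := by
          rw [← Finset.sum_neg_distrib]
          refine le_trans hb (le_of_eq ?_)
          refine Finset.sum_congr rfl fun i _ => ?_
          push_cast
          ring
        linarith
      · have h17 := hcc2
        simp only [hyy] at h17
        have h18 : ∑ r, ((-(A r k : ℚ) : ℚ) : ℝ) * cc r = -∑ r, (A r k : ℝ) * cc r := by
          rw [← Finset.sum_neg_distrib]
          refine Finset.sum_congr rfl fun r _ => ?_
          push_cast
          ring
        rw [h18] at h17
        linarith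
    choose C hC1 hC2 hC3 using hstepC
    set ctot : Fin d → ℝ := fun i => ∑ k, if h : x k = 0 then C k h i else 0 with hctot
    set γ : Fin m → ℝ := fun j => ∑ i, (A i j : ℝ) * ctot i with hγ
    have hγswap : ∀ j, γ j = ∑ k, if h : x k = 0 then (∑ i, (A i j : ℝ) * C k h i) else 0 := by
      intro j
      show (∑ i, (A i j : ℝ) * ctot i) = _
      rw [show (∑ i, (A i j : ℝ) * ctot i) =
          ∑ i, ∑ k, (A i j : ℝ) * (if h : x k = 0 then C k h i else 0) from
        Finset.sum_congr rfl fun i _ => by rw [hctot]; exact Finset.mul_sum _ _ _]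
      rw [Finset.sum_comm]
      refine Finset.sum_congr rfl fun k _ => ?_
      by_cases h : x k = 0
      · simp only [dif_pos h, Finset.mul_sum]
      · simp only [dif_neg h, mul_zero, Finset.sum_const_zero]
    have hγ0 : ∀ j, x j ≠ 0 → γ j = 0 := by
      intro j hj
      rw [hγswap j]
      refine Finset.sum_eq_zero fun k _ => ?_
      by_cases h : x k = 0
      · rw [dif_pos h, hC1 k h j hj]
      · rw [dif_neg h]
    have hγpos : ∀ j, x j = 0 → 0 < γ j := by
      intro j hj
      rw [hγswap j]
      refine Finset.sum_pos' (fun k _ => ?_) ⟨j, Finset.mem_univ j, ?_⟩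
      · by_cases h : x k = 0
        · rw [dif_pos h]; exact hC2 k h j
        · rw [dif_neg h]
      · rw [dif_pos hj]; exact hC3 j hj
    set α : Fin m → ℝ := fun j => ∑ i, (A i j : ℝ) * w i with hα
    set t : ℕ → Fin d → ℝ := fun n i => Real.exp (w i - n * ctot i) with ht
    have hφ : ∀ (n : ℕ) (j : Fin m), ∏ i, t n i ^ A i j = Real.exp (α j - n * γ j) := by
      intro n j
      calc ∏ i, t n i ^ A i j = ∏ i, Real.exp ((A i j : ℝ) * (w i - n * ctot i)) := by
            refine Finset.prod_congr rfl fun i _ => ?_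
            rw [ht]
            exact (Real.exp_nat_mul _ _).symm
        _ = Real.exp (∑ i, (A i j : ℝ) * (w i - n * ctot i)) := (Real.exp_sum _ _).symm
        _ = Real.exp (α j - n * γ j) := by
            congr 1
            show ∑ i, (A i j : ℝ) * (w i - n * ctot i) =
              (∑ i, (A i j : ℝ) * w i) - n * ∑ i, (A i j : ℝ) * ctot i
            rw [Finset.sum_congr rfl fun i (_ : i ∈ Finset.univ) =>
              mul_sub ((A i j : ℝ)) (w i) ((n : ℝ) * ctot i)]
            rw [Finset.sum_sub_distrib]
            congr 1
            rw [Finset.mul_sum]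
            exact Finset.sum_congr rfl fun i _ => by ring
    have htend : Filter.Tendsto (fun n => (fun j => ∏ i, t n i ^ A i j))
        Filter.atTop (nhds x) := by
      rw [tendsto_pi_nhds]
      intro j
      simp only [hφ]
      by_cases hj : x j = 0
      · have h10 : Filter.Tendsto (fun n : ℕ => α j - n * γ j) Filter.atTop Filter.atBot := by
          have h11 := (tendsto_natCast_atTop_atTop (R := ℝ)).atTop_mul_const (hγpos j hj)
          have h12 := Filter.tendsto_atTop_add_const_right Filter.atTop (-α j) h11
          have h13 := Filter.tendsto_neg_atBot_iff.mpr h12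
          refine h13.congr fun n => ?_
          ring
        have h14 := Real.tendsto_exp_atBot.comp h10
        rw [hj]
        exact h14
      · have hα1 : α j = Real.log (x j) := hwS j hj
        have hγ1 : γ j = 0 := hγ0 j hj
        rw [hα1, hγ1]
        simp only [mul_zero, sub_zero]
        rw [Real.exp_log (hxpos j hj)]
        exact tendsto_const_nhds
    exact mem_closure_of_tendsto htend (Filter.Eventually.of_forall fun n =>
      ⟨t n, fun i => (Real.exp_pos _).le, rfl⟩)
  · -- easy direction: closure of image ⊆ X_A
    apply closure_minimal
    · rintro - ⟨tt, htt, rfl⟩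
      refine ⟨fun j => Finset.prod_nonneg fun i _ => pow_nonneg (htt i) _, ?_⟩
      intro u v huv
      have key : ∀ u0 : Fin m → ℕ, ∏ j, (∏ i, tt i ^ A i j) ^ u0 j
          = ∏ i, tt i ^ (∑ j, A i j * u0 j) := by
        intro u0
        calc ∏ j, (∏ i, tt i ^ A i j) ^ u0 j
            = ∏ j, ∏ i, (tt i ^ A i j) ^ u0 j := by
              exact Finset.prod_congr rfl fun j _ => (Finset.prod_pow _ _ _).symm
          _ = ∏ i, ∏ j, (tt i ^ A i j) ^ u0 j := Finset.prod_comm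
          _ = ∏ i, tt i ^ (∑ j, A i j * u0 j) := by
              refine Finset.prod_congr rfl fun i _ => ?_
              rw [← Finset.prod_pow_eq_pow_sum]
              exact Finset.prod_congr rfl fun j _ => (pow_mul (tt i) (A i j) (u0 j)).symm
      rw [key u, key v]
      exact Finset.prod_congr rfl fun i _ => by rw [huv i]
    · have hXeq : {x : Fin m → ℝ | (∀ j, 0 ≤ x j) ∧
          ∀ u v : Fin m → ℕ, (∀ i, ∑ j, A i j * u j = ∑ j, A i j * v j) →
            ∏ j, x j ^ u j = ∏ j, x j ^ v j}
          = (⋂ j, {x : Fin m → ℝ | 0 ≤ x j}) ∩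
            ⋂ (u : Fin m → ℕ), ⋂ (v : Fin m → ℕ),
              ⋂ (_ : ∀ i, ∑ j, A i j * u j = ∑ j, A i j * v j),
              {x : Fin m → ℝ | ∏ j, x j ^ u j = ∏ j, x j ^ v j} := by
        ext x
        simp only [Set.mem_setOf_eq, Set.mem_inter_iff, Set.mem_iInter]
      rw [hXeq]
      refine IsClosed.inter
        (isClosed_iInter fun j => isClosed_le continuous_const (continuous_apply j)) ?_
      refine isClosed_iInter fun u => isClosed_iInter fun v => isClosed_iInter fun _ => ?_
      exact isClosed_eq
        (continuous_finset_prod _ fun j _ => (continuous_apply j).pow _)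
        (continuous_finset_prod _ fun j _ => (continuous_apply j).pow _)
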